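/- arXiv:2405.09088 — 2 statements merged into one kernel-verified Lean document; each statement's English description precedes it below -/
import Mathlib

section
/- Suppose γ_M(Y) ≥ 0 for every Y ⊆ E(M), and let X be a flat of M. Then for every x ∈ X such that x is not a coloop of the restriction M|X, there exists a cyclic flat Z_x of M with Z_x ⊆ X, x ∈ Z_x, and γ_M(Z_x) > 0. -/
open Set Matroid
open scoped Classical

namespace Paper

variable {α : Type*}

/-- A circuit of a matroid: a minimal dependent set. -/
def Circuit (M : Matroid α) (C : Set α) : Prop :=
  M.Dep C ∧ ∀ D ⊂ C, M.Indep D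

/-- A coloop: an element of the ground set lying in no circuit. -/
def Coloop (M : Matroid α) (x : α) : Prop :=
  x ∈ M.E ∧ ∀ C, Circuit M C → x ∉ C

/-- The set of coloops of a matroid. -/
def coloops (M : Matroid α) : Set α := {x | Coloop M x}

/-- A cyclic set: a subset of the ground set each of whose elements lies in a
circuit contained in the set (equivalently, the restriction has no coloops). -/
def Cyclic (M : Matroid α) (X : Set α) : Prop :=
  X ⊆ M.E ∧ ∀ x ∈ X, ∃ C, Circuit M C ∧ C ⊆ X ∧ x ∈ C

/-- A cyclic flat: a cyclic set that is also a flat. -/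
def CyclicFlat (M : Matroid α) (X : Set α) : Prop :=
  Cyclic M X ∧ M.IsFlat X

/-- The rank of a set: the largest cardinality of an independent subset. -/
noncomputable def rk (M : Matroid α) (X : Set α) : ℕ :=
  sSup (Set.ncard '' {I | M.Indep I ∧ I ⊆ X})

/-- The nullity of a set: `n(X) = |X| − r(X)`. -/
noncomputable def nullity (M : Matroid α) (X : Set α) : ℤ :=
  (X.ncard : ℤ) - rk M X

/-- Deletion of a single element: `M \ e`. -/
noncomputable def deleteElem (M : Matroid α) (e : α) : Matroid α :=
  M ↾ (M.E \ {e})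

variable {M : Matroid α}

lemma flat_of_closure_subset {F : Set α} (hFE : F ⊆ M.E) (h : M.closure F ⊆ F) : M.IsFlat F := by
  refine ⟨fun I X hIF hIX ↦ ?_, hFE⟩
  have h1 : X ⊆ M.closure I := hIX.subset_closure
  rw [hIF.closure_eq_closure] at h1
  exact h1.trans h

lemma Circuit.mem_closure_diff {C : Set α} (hC : Circuit M C) {x : α} (hx : x ∈ C) :
    x ∈ M.closure (C \ {x}) := by
  have hI : M.Indep (C \ {x}) := hC.2 _ (sdiff_singleton_ssubset.2 hx)
  rw [hI.mem_closure_iff_of_notMem (by simp)]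
  rw [insert_diff_singleton, insert_eq_of_mem hx]; exact hC.1

lemma exists_circuit_subset_of_dep_aux [Fintype α] :
    ∀ n (D : Set α), D.ncard = n → M.Dep D → ∃ C ⊆ D, Circuit M C := by
  intro n
  induction n using Nat.strong_induction_on with
  | _ n ih =>
    intro D hcard hD
    by_cases h : ∀ D' ⊂ D, M.Indep D'
    · exact ⟨D, Subset.rfl, hD, h⟩
    push_neg at h
    obtain ⟨D', hD'D, hD'⟩ := h
    obtain ⟨C, hCD', hC⟩ := ih D'.ncard (hcard ▸ Set.ncard_lt_ncard hD'D (Set.toFinite D))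
      D' rfl ⟨hD', hD'D.subset.trans hD.subset_ground⟩
    exact ⟨C, hCD'.trans hD'D.subset, hC⟩

lemma exists_circuit_subset_of_dep [Fintype α] {D : Set α} (hD : M.Dep D) :
    ∃ C ⊆ D, Circuit M C := exists_circuit_subset_of_dep_aux _ D rfl hD

lemma exists_circuit_of_mem_closure [Fintype α] {S : Set α} {y : α}
    (hy : y ∈ M.closure S) (hyS : y ∉ S) (hSE : S ⊆ M.E) :
    ∃ C, Circuit M C ∧ C ⊆ insert y S ∧ y ∈ C := by
  obtain ⟨I, hI⟩ := M.exists_isBasis S hSE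
  have hyI : y ∈ M.closure I := by rwa [hI.closure_eq_closure]
  have hdep : M.Dep (insert y I) := by
    rw [hI.indep.insert_dep_iff]
    exact ⟨hyI, fun h => hyS (hI.subset h)⟩
  obtain ⟨C, hCsub, hC⟩ := exists_circuit_subset_of_dep hdep
  refine ⟨C, hC, hCsub.trans (insert_subset_insert hI.subset), ?_⟩
  by_contra hyC
  have : C ⊆ I := fun z hz => (hCsub hz).resolve_left (fun h => hyC (h ▸ hz))
  exact hC.1.not_indep (hI.indep.subset this)

lemma rk_eq_of_basis [Fintype α] {S I : Set α} (hI : M.IsBasis I S) : rk M S = I.ncard := by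
  apply le_antisymm
  · apply csSup_le
    · exact ⟨I.ncard, ⟨I, ⟨hI.indep, hI.subset⟩, rfl⟩⟩
    rintro n ⟨J, ⟨hJind, hJS⟩, rfl⟩
    obtain ⟨J', hJ', hJJ'⟩ := hJind.subset_isBasis_of_subset hJS hI.subset_ground
    have hcard : J'.ncard = I.ncard := by
      have := hJ'.encard_eq_encard hI
      rw [Set.ncard_def, this, ← Set.ncard_def]
    exact hcard ▸ Set.ncard_le_ncard hJJ' (Set.toFinite J')
  · apply le_csSup
    · refine ⟨Fintype.card α, ?_⟩
      rintro n ⟨J, _, rfl⟩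
      calc J.ncard ≤ (Set.univ : Set α).ncard := Set.ncard_le_ncard (Set.subset_univ J) (Set.toFinite _)
        _ = Fintype.card α := Set.ncard_univ α ▸ (by simp [Set.ncard_univ])
    exact ⟨I, ⟨hI.indep, hI.subset⟩, rfl⟩

lemma rk_insert_of_mem_closure [Fintype α] {S : Set α} {x : α} (hSE : S ⊆ M.E)
    (hx : x ∈ M.closure S) : rk M (insert x S) = rk M S := by
  obtain ⟨I, hI⟩ := M.exists_isBasis S hSE
  have hI2 : M.IsBasis I (insert x S) := by
    refine hI.indep.isBasis_of_subset_of_subset_closure (hI.subset.trans (subset_insert _ _)) ?_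
    rw [hI.closure_eq_closure]
    exact insert_subset hx (M.subset_closure S hSE)
  rw [rk_eq_of_basis hI, rk_eq_of_basis hI2]

lemma restrict_circuit_iff {X C : Set α} (hXE : X ⊆ M.E) :
    Circuit (M ↾ X) C ↔ Circuit M C ∧ C ⊆ X := by
  constructor
  · rintro ⟨hdep, hmin⟩
    rw [restrict_dep_iff] at hdep
    refine ⟨⟨⟨hdep.1, hdep.2.trans hXE⟩, fun D hD => ?_⟩, hdep.2⟩
    · exact ((hmin D hD).of_restrict)
  · rintro ⟨⟨hdep, hmin⟩, hCX⟩
    refine ⟨restrict_dep_iff.mpr ⟨hdep.not_indep, hCX⟩, fun D hD => ?_⟩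
    exact (hmin D hD).indep_restrict_of_subset (hD.subset.trans hCX)

variable [Fintype α] [DecidableEq α]

/-- The `γ` function: `γ_M(X) = n(X) − Σ_{Z ∈ Z(M), Z ⊊ X} γ_M(Z)`. -/
noncomputable def gamma (M : Matroid α) (X : Finset α) : ℤ :=
  nullity M ↑X -
    ∑ Z ∈ (Finset.univ.filter (fun Z : Finset α => CyclicFlat M ↑Z ∧ Z ⊂ X)).attach,
      gamma M Z.1
termination_by X.card
decreasing_by
  exact Finset.card_lt_card (Finset.mem_filter.mp Z.2).2.2

lemma gamma_eq (M : Matroid α) (X : Finset α) :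
    gamma M X = nullity M ↑X -
      ∑ Z ∈ Finset.univ.filter (fun Z : Finset α => CyclicFlat M ↑Z ∧ Z ⊂ X), gamma M Z := by
  rw [gamma, Finset.sum_attach]

theorem statement_5 (M : Matroid α)
    (h : ∀ Y : Finset α, ↑Y ⊆ M.E → 0 ≤ gamma M Y)
    (X : Finset α) (hflat : M.IsFlat ↑X) :
    ∀ x ∈ X, ¬ Coloop (M ↾ (↑X : Set α)) x →
      ∃ Z : Finset α, CyclicFlat M ↑Z ∧ Z ⊆ X ∧ x ∈ Z ∧ 0 < gamma M Z := by
  intro x hxX hncol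
  have hXE : (↑X : Set α) ⊆ M.E := hflat.subset_ground
  -- extract a circuit of M contained in X through x
  have hxC : ∃ C, Circuit M C ∧ C ⊆ (↑X : Set α) ∧ x ∈ C := by
    rw [Coloop] at hncol
    push_neg at hncol
    obtain ⟨C, hC, hxC⟩ := hncol (by simpa using hxX)
    rw [restrict_circuit_iff hXE] at hC
    exact ⟨C, hC.1, hC.2, hxC⟩
  -- the cyclic part of X
  set D : Finset α := X.filter (fun y => ∃ C, Circuit M C ∧ C ⊆ (↑X : Set α) ∧ y ∈ C) with hDdef
  have hDX : D ⊆ X := Finset.filter_subset _ _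
  have hDE : (↑D : Set α) ⊆ M.E := (Finset.coe_subset.mpr hDX).trans hXE
  have hxD : x ∈ D := Finset.mem_filter.mpr ⟨hxX, hxC⟩
  have hmemD : ∀ y : α, y ∈ (↑D : Set α) ↔
      (y ∈ X ∧ ∃ C, Circuit M C ∧ C ⊆ (↑X : Set α) ∧ y ∈ C) := by
    intro y; simp [hDdef, Finset.mem_filter]
  have hDcf : CyclicFlat M ↑D := by
    constructor
    · refine ⟨hDE, fun y hy => ?_⟩
      obtain ⟨hyX, C, hC, hCX, hyC⟩ := (hmemD y).mp hy
      refine ⟨C, hC, fun z hz => ?_, hyC⟩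
      exact (hmemD z).mpr ⟨by exact_mod_cast hCX hz, C, hC, hCX, hz⟩
    · refine flat_of_closure_subset hDE (fun y hy => ?_)
      have hyX : y ∈ (↑X : Set α) := by
        have := M.closure_subset_closure (Finset.coe_subset.mpr hDX) hy
        rwa [hflat.closure] at this
      by_contra hyD
      obtain ⟨C, hC, hCsub, hyC⟩ := exists_circuit_of_mem_closure hy hyD hDE
      refine hyD ((hmemD y).mpr ⟨by exact_mod_cast hyX, C, hC, ?_, hyC⟩)
      refine hCsub.trans (insert_subset hyX (Finset.coe_subset.mpr hDX))
  -- by contradiction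
  by_contra hcon
  push_neg at hcon
  have hle : ∀ Z : Finset α, CyclicFlat M ↑Z → Z ⊆ X → x ∈ Z → gamma M Z = 0 := by
    intro Z h1 h2 h3
    exact le_antisymm (hcon Z h1 h2 h3) (h Z h1.1.1)
  set Y : Finset α := D.erase x with hYdef
  have hYD : Y ⊆ D := Finset.erase_subset _ _
  have hYE : (↑Y : Set α) ⊆ M.E := (Finset.coe_subset.mpr hYD).trans hDE
  have hYcoe : (↑Y : Set α) = (↑D : Set α) \ {x} := by simp [hYdef]
  have hDcoe : (↑D : Set α) = insert x ↑Y := by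
    rw [hYcoe, insert_diff_singleton, insert_eq_of_mem (by exact_mod_cast hxD)]
  -- nullity relation
  have hrk : rk M ↑D = rk M ↑Y := by
    obtain ⟨C, hC, hCD, hxC2⟩ := hDcf.1.2 x (by exact_mod_cast hxD)
    have hxcl : x ∈ M.closure ↑Y := by
      apply M.closure_subset_closure (show C \ {x} ⊆ (↑Y : Set α) by
        rw [hYcoe]; exact diff_subset_diff_left hCD)
      exact hC.mem_closure_diff hxC2
    rw [hDcoe, rk_insert_of_mem_closure hYE hxcl]
  have hcard : (D.card : ℤ) = Y.card + 1 := by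
    rw [hYdef, Finset.card_erase_of_mem hxD]
    have : 1 ≤ D.card := Finset.card_pos.mpr ⟨x, hxD⟩
    push_cast [Nat.cast_sub this]
    ring
  have hnul : nullity M ↑D = nullity M ↑Y + 1 := by
    simp only [nullity, hrk, Set.ncard_coe_finset]
    rw [hcard]; ring
  -- sums
  set s := Finset.univ.filter (fun Z : Finset α => CyclicFlat M ↑Z ∧ Z ⊂ D) with hs
  have hsplit : ∑ Z ∈ s, gamma M Z =
      ∑ Z ∈ s.filter (fun Z => x ∈ Z), gamma M Z +
      ∑ Z ∈ s.filter (fun Z => x ∉ Z), gamma M Z :=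
    (Finset.sum_filter_add_sum_filter_not s _ _).symm
  have hsum1 : ∑ Z ∈ s.filter (fun Z => x ∈ Z), gamma M Z = 0 := by
    apply Finset.sum_eq_zero
    intro Z hZ
    simp only [hs, Finset.mem_filter, Finset.mem_univ, true_and] at hZ
    exact hle Z hZ.1.1 (hZ.1.2.subset.trans hDX) hZ.2
  have hset2 : s.filter (fun Z => x ∉ Z) =
      Finset.univ.filter (fun Z : Finset α => CyclicFlat M ↑Z ∧ Z ⊆ Y) := by
    ext Z
    simp only [hs, Finset.mem_filter, Finset.mem_univ, true_and]
    constructor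
    · rintro ⟨⟨hcf, hZD⟩, hxZ⟩
      exact ⟨hcf, fun z hz => Finset.mem_erase.mpr ⟨fun he => hxZ (he ▸ hz), hZD.subset hz⟩⟩
    · rintro ⟨hcf, hZY⟩
      have hxZ : x ∉ Z := fun hx' => (Finset.mem_erase.mp (hZY hx')).1 rfl
      exact ⟨⟨hcf, lt_of_le_of_lt hZY (Finset.erase_ssubset hxD)⟩, hxZ⟩
  have hsum2 : ∑ Z ∈ Finset.univ.filter (fun Z : Finset α => CyclicFlat M ↑Z ∧ Z ⊆ Y),
      gamma M Z ≤ nullity M ↑Y := by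
    have hsplitY : ∑ Z ∈ Finset.univ.filter (fun Z : Finset α => CyclicFlat M ↑Z ∧ Z ⊆ Y), gamma M Z =
        ∑ Z ∈ (Finset.univ.filter (fun Z : Finset α => CyclicFlat M ↑Z ∧ Z ⊆ Y)).filter (fun Z => Z ⊂ Y), gamma M Z +
        ∑ Z ∈ (Finset.univ.filter (fun Z : Finset α => CyclicFlat M ↑Z ∧ Z ⊆ Y)).filter (fun Z => ¬ Z ⊂ Y), gamma M Z :=
      (Finset.sum_filter_add_sum_filter_not _ _ _).symm
    have he1 : (Finset.univ.filter (fun Z : Finset α => CyclicFlat M ↑Z ∧ Z ⊆ Y)).filter (fun Z => Z ⊂ Y) =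
        Finset.univ.filter (fun Z : Finset α => CyclicFlat M ↑Z ∧ Z ⊂ Y) := by
      ext Z
      simp only [Finset.mem_filter, Finset.mem_univ, true_and]
      exact ⟨fun ⟨⟨a, _⟩, c⟩ => ⟨a, c⟩, fun ⟨a, c⟩ => ⟨⟨a, c.subset⟩, c⟩⟩
    have he2 : ∑ Z ∈ (Finset.univ.filter (fun Z : Finset α => CyclicFlat M ↑Z ∧ Z ⊆ Y)).filter (fun Z => ¬ Z ⊂ Y), gamma M Z ≤ gamma M Y := by
      have hsub : (Finset.univ.filter (fun Z : Finset α => CyclicFlat M ↑Z ∧ Z ⊆ Y)).filter (fun Z => ¬ Z ⊂ Y) ⊆ {Y} := by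
        intro Z hZ
        simp only [Finset.mem_filter, Finset.mem_univ, true_and] at hZ
        have : Z = Y := by
          by_contra hne
          exact hZ.2 (lt_of_le_of_ne hZ.1.2 hne)
        simp [this]
      calc ∑ Z ∈ (Finset.univ.filter (fun Z : Finset α => CyclicFlat M ↑Z ∧ Z ⊆ Y)).filter (fun Z => ¬ Z ⊂ Y), gamma M Z
          ≤ ∑ Z ∈ ({Y} : Finset (Finset α)), gamma M Z := by
            apply Finset.sum_le_sum_of_subset_of_nonneg hsub
            intro Z hZ _
            simp only [Finset.mem_singleton] at hZ
            exact hZ ▸ h Y hYE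
        _ = gamma M Y := Finset.sum_singleton _ _
    rw [he1] at hsplitY
    have hYg := gamma_eq M Y
    linarith [he2]
  have hgD := gamma_eq M D
  rw [← hs] at hgD
  have hgD0 : gamma M D = 0 := hle D hDcf hDX hxD
  rw [hgD0, hsplit, hsum1, hset2, hnul] at hgD
  linarith [hsum2]

end Paper
end

section
/- For every cyclic flat Z of M there exists a cyclic flat Z' of M⁺ with Z' − e = Z; indeed Z' = cl_{M⁺}(Z) works. -/
open Set Matroid
open scoped Classical

namespace Paper

variable {α : Type*}

lemma closure_flat' (M : Matroid α) (X : Set α) : M.IsFlat (M.closure X) := by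
  haveI : Nonempty {F // M.IsFlat F ∧ X ∩ M.E ⊆ F} :=
    ⟨⟨M.E, M.ground_isFlat, inter_subset_right⟩⟩
  have h : M.closure X = ⋂ F : {F // M.IsFlat F ∧ X ∩ M.E ⊆ F}, F.1 := by
    rw [closure_def, sInter_eq_iInter]; rfl
  rw [h]
  exact Matroid.IsFlat.iInter fun F ↦ F.2.1

lemma exists_circuit_subset (M : Matroid α) :
    ∀ n (X : Set α), X.Finite → X.ncard = n → M.Dep X → ∃ C, Circuit M C ∧ C ⊆ X := by
  intro n
  induction n using Nat.strong_induction_on with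
  | _ n ih =>
    intro X hXfin hn hX
    by_cases h : ∀ D ⊂ X, M.Indep D
    · exact ⟨X, ⟨hX, h⟩, Subset.rfl⟩
    · push_neg at h
      obtain ⟨D, hDX, hD⟩ := h
      have hDdep : M.Dep D := dep_iff.mpr ⟨hD, hDX.subset.trans hX.subset_ground⟩
      obtain ⟨C, hC, hCD⟩ :=
        ih D.ncard (hn ▸ Set.ncard_lt_ncard hDX hXfin) D (hXfin.subset hDX.subset) rfl hDdep
      exact ⟨C, hC, hCD.trans hDX.subset⟩

lemma circuit_restrict_iff (M : Matroid α) {R C : Set α} (hR : R ⊆ M.E) (hC : C ⊆ R) :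
    Circuit (M ↾ R) C ↔ Circuit M C := by
  have hdep : (M ↾ R).Dep C ↔ M.Dep C := by
    rw [restrict_dep_iff, M.dep_iff, and_iff_left (hC.trans hR), and_iff_left hC]
  constructor
  · rintro ⟨hd, hmin⟩
    exact ⟨hdep.mp hd, fun D hD ↦ ((hmin D hD).1 : M.Indep D)⟩
  · rintro ⟨hd, hmin⟩
    exact ⟨hdep.mpr hd, fun D hD ↦ restrict_indep_iff.mpr ⟨hmin D hD, hD.subset.trans hC⟩⟩

theorem statement_9 (M : Matroid α) (hfin : M.E.Finite) (e : α) (he : e ∈ M.E)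
    (Z : Set α) (hZ : CyclicFlat (deleteElem M e) Z) :
    (∃ Z', CyclicFlat M Z' ∧ Z' \ {e} = Z) ∧
    CyclicFlat M (M.closure Z) ∧ M.closure Z \ {e} = Z := by

  set R := M.E \ {e} with hR
  have hRE : R ⊆ M.E := diff_subset
  set N := M ↾ R with hN
  have hNE : N.E = R := rfl
  have hZR : Z ⊆ R := hZ.2.subset_ground
  have hZE : Z ⊆ M.E := hZR.trans hRE
  have heZ : e ∉ Z := fun h ↦ (hZR h).2 rfl
  -- the closure of Z in M meets R only in Z
  have hclR : M.closure Z ∩ R ⊆ Z := by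
    intro x hx
    obtain ⟨I, hI⟩ := N.exists_isBasis Z (by rw [hNE]; exact hZR)
    have hIM : M.IsBasis I Z := ((isBasis_restrict_iff hRE).mp hI).1
    by_cases hxZ : x ∈ Z
    · exact hxZ
    have hxI : x ∉ I := fun h ↦ hxZ (hIM.subset h)
    have hxcl : x ∈ M.closure I := by
      rw [hIM.closure_eq_closure]; exact hx.1
    have hdep : M.Dep (insert x I) := (hIM.indep.mem_closure_iff_of_notMem hxI).mp hxcl
    have hNdep : N.Dep (insert x I) := by
      rw [hN, restrict_dep_iff]
      exact ⟨hdep.not_indep, insert_subset hx.2 (hIM.subset.trans hZR)⟩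
    have hxNcl : x ∈ N.closure I :=
      (hI.indep.mem_closure_iff_of_notMem hxI).mpr hNdep
    have hflat : N.closure Z = Z := hZ.2.closure
    rw [hI.closure_eq_closure, hflat] at hxNcl
    exact hxNcl
  have hclsub : M.closure Z ⊆ insert e Z := by
    intro x hx
    by_cases hxe : x = e
    · exact hxe ▸ mem_insert _ _
    · exact mem_insert_of_mem _ (hclR ⟨hx, M.closure_subset_ground Z hx, hxe⟩)
  have hdiff : M.closure Z \ {e} = Z := by
    apply subset_antisymm
    · intro x hx
      have := hclsub hx.1
      rcases this with h | h
      · exact absurd h hx.2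
      · exact h
    · exact fun x hx ↦ ⟨M.subset_closure Z hZE hx, fun h ↦ heZ (h ▸ hx)⟩
  have hcyc : Cyclic M (M.closure Z) := by
    refine ⟨M.closure_subset_ground Z, fun x hx ↦ ?_⟩
    by_cases hxZ : x ∈ Z
    · obtain ⟨C, hC, hCZ, hxC⟩ := hZ.1.2 x hxZ
      refine ⟨C, (circuit_restrict_iff M hRE (hCZ.trans hZR)).mp hC,
        hCZ.trans (M.subset_closure Z hZE), hxC⟩
    · have hxe : x = e := by
        rcases hclsub hx with h | h
        · exact h
        · exact absurd h hxZ
      subst hxe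
      obtain ⟨I, hIM⟩ := M.exists_isBasis Z hZE
      have hxI : x ∉ I := fun h ↦ hxZ (hIM.subset h)
      have hxcl : x ∈ M.closure I := by rw [hIM.closure_eq_closure]; exact hx
      have hdep : M.Dep (insert x I) := (hIM.indep.mem_closure_iff_of_notMem hxI).mp hxcl
      obtain ⟨C, hC, hCsub⟩ := exists_circuit_subset M (insert x I).ncard (insert x I)
        (hfin.subset hdep.subset_ground) rfl hdep
      have hxC : x ∈ C := by
        by_contra hxC
        have hCI : C ⊆ I := fun y hy ↦ by
          rcases hCsub hy with h | h
          · exact absurd (h ▸ hy) hxC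
          · exact h
        exact hC.1.not_indep (hIM.indep.subset hCI)
      refine ⟨C, hC, ?_, hxC⟩
      exact hCsub.trans (insert_subset hx ((hIM.subset.trans (M.subset_closure Z hZE))))
  have hCF : CyclicFlat M (M.closure Z) := ⟨hcyc, closure_flat' M Z⟩
  exact ⟨⟨M.closure Z, hCF, hdiff⟩, hCF, hdiff⟩


end Paper
end
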